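/- Let Ω = ℕ → Bool carry the product σ-algebra, and let μ be the product over ℕ of the uniform probability measure on Bool (the fair-coin measure). For every natural number b ≥ 1 there exists a measurable function f : Ω → Fin b such that the pushforward measure Measure.map f μ assigns measure 1/b to every singleton of Fin b, i.e., f draws a uniformly random number from 1 to b using fair coin flips. -/

import Mathlib

open MeasureTheory

/-- `μ` is the fair-coin measure on `ℕ → Bool`: the product over `ℕ` of the uniform
(Bernoulli(1/2)) probability measure on `Bool`, characterized as the probability measure
under which the coordinates are independent and each is a fair coin. -/
def IsFairCoinMeasure (μ : Measure (ℕ → Bool)) : Prop :=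
  IsProbabilityMeasure μ ∧
  ProbabilityTheory.iIndepFun (fun i (r : ℕ → Bool) => r i) μ ∧
  ∀ i : ℕ, μ {r | r i = true} = 1 / 2

namespace FairCoinAux

open Finset

/-- value of a bit word (little endian) -/
def wsum (c : ℕ → Bool) (n : ℕ) : ℕ := ∑ i ∈ Finset.range n, if c i then 2^i else 0

lemma wsum_lt (c : ℕ → Bool) (n : ℕ) : wsum c n < 2^n := by
  induction n with
  | zero => simp [wsum]
  | succ n ih =>
    have h1 : wsum c (n+1) = wsum c n + (if c n then 2^n else 0) := by
      rw [wsum, wsum, Finset.sum_range_succ]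
    have h2 : (if c n then 2^n else 0) ≤ 2^n := by split <;> simp
    have h3 : (2:ℕ)^(n+1) = 2^n + 2^n := by ring
    omega

lemma wsum_succ' (c : ℕ → Bool) (n : ℕ) :
    wsum c (n+1) = (if c 0 then 1 else 0) + 2 * wsum (fun i => c (i+1)) n := by
  rw [wsum, Finset.sum_range_succ']
  have hs : (∑ i ∈ Finset.range n, if c (i+1) then 2^(i+1) else 0)
      = 2 * wsum (fun i => c (i+1)) n := by
    rw [wsum, Finset.mul_sum]
    exact Finset.sum_congr rfl (fun i _ => by split <;> ring)
  rw [hs, pow_zero]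
  cases hc : c 0 <;> simp [hc] <;> omega

lemma wsum_congr {c c' : ℕ → Bool} {n : ℕ} (h : ∀ i < n, c i = c' i) :
    wsum c n = wsum c' n := by
  refine Finset.sum_congr rfl fun i hi => ?_
  rw [h i (Finset.mem_range.mp hi)]

lemma testBit_wsum (c : ℕ → Bool) (n : ℕ) : ∀ i < n, (wsum c n).testBit i = c i := by
  induction n generalizing c with
  | zero => omega
  | succ n ih =>
    intro i hi
    rw [wsum_succ']
    set a := (if c 0 then 1 else 0) with ha
    have ha01 : a = 0 ∨ a = 1 := by rw [ha]; split <;> simp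
    set m := wsum (fun j => c (j+1)) n with hm
    cases i with
    | zero =>
      rw [Nat.testBit_zero]
      have hmod : (a + 2*m) % 2 = a := by omega
      rw [hmod]
      cases hc : c 0 <;> simp [ha, hc]
    | succ i =>
      rw [Nat.testBit_succ]
      have hdiv : (a + 2*m) / 2 = m := by omega
      rw [hdiv, hm, ih _ i (by omega)]

lemma wsum_testBit (n : ℕ) : ∀ j < 2^n, wsum j.testBit n = j := by
  induction n with
  | zero =>
    intro j hj
    have : j = 0 := by simpa using hj
    subst this; simp [wsum]
  | succ n ih =>
    intro j hj
    have hpow : (2:ℕ)^(n+1) = 2*2^n := by ring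
    have h2 : j / 2 < 2^n := by omega
    rw [wsum_succ']
    have heq : (fun i => j.testBit (i+1)) = (j/2).testBit :=
      funext fun i => Nat.testBit_succ j i
    rw [heq, ih _ h2, Nat.testBit_zero]
    rcases Nat.mod_two_eq_zero_or_one j with h1 | h1 <;> simp [h1] <;> omega

/-- value of the `t`-th block of `n` bits -/
def val (n t : ℕ) (r : ℕ → Bool) : ℕ := wsum (fun i => r (t*n + i)) n

lemma val_lt (n t : ℕ) (r : ℕ → Bool) : val n t r < 2^n := wsum_lt _ _

lemma val_meas (n t : ℕ) : Measurable (val n t) := by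
  unfold val wsum
  refine Finset.measurable_sum _ fun i _ => ?_
  exact (measurable_of_countable (fun x : Bool => if x then 2^i else 0)).comp
    (measurable_pi_apply _)

variable {μ : Measure (ℕ → Bool)}

lemma coord_half (hμ : IsFairCoinMeasure μ) (i : ℕ) (v : Bool) :
    μ ((fun r : ℕ → Bool => r i) ⁻¹' {v}) = 1/2 := by
  obtain ⟨hp, hind, hhalf⟩ := hμ
  haveI := hp
  cases v
  · have hset : (fun r : ℕ → Bool => r i) ⁻¹' {false} = {r | r i = true}ᶜ := by
      ext r; simp
    have hm : MeasurableSet {r : ℕ → Bool | r i = true} := by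
      have h2 : {r : ℕ → Bool | r i = true} = (fun r : ℕ → Bool => r i) ⁻¹' {true} := rfl
      rw [h2]; exact measurable_pi_apply i (measurableSet_singleton true)
    rw [hset, measure_compl hm (measure_ne_top μ _), hhalf i, measure_univ, one_div,
      ENNReal.one_sub_inv_two]
  · exact hhalf i

lemma cylinder_measure (hμ : IsFairCoinMeasure μ) (m : ℕ) (w : ℕ → Bool) :
    μ {r : ℕ → Bool | ∀ i < m, r i = w i} = (1/2 : ENNReal) ^ m := by
  have hset : {r : ℕ → Bool | ∀ i < m, r i = w i}
      = ⋂ i ∈ Finset.range m, (fun r : ℕ → Bool => r i) ⁻¹' {w i} := by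
    ext r; simp [Finset.mem_range]
  rw [hset, hμ.2.1.measure_inter_preimage_eq_mul (Finset.range m)
      (fun i _ => measurableSet_singleton _)]
  rw [Finset.prod_congr rfl (fun i _ => coord_half hμ i (w i)), Finset.prod_const,
    Finset.card_range]

lemma block_measure (hμ : IsFairCoinMeasure μ) {n : ℕ} (hn : 0 < n) (t : ℕ) (B : ℕ → Finset ℕ)
    (hB : ∀ s < t, B s ⊆ Finset.range (2^n)) :
    μ (⋂ s ∈ Finset.range t, {r | val n s r ∈ B s})
      = (∏ s ∈ Finset.range t, ((B s).card : ENNReal)) * (1/2 : ENNReal) ^ (t * n) := by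
  classical
  set G : Finset (Fin t → ℕ) := Fintype.piFinset (fun s => B s) with hG
  set W : (Fin t → ℕ) → ℕ → Bool := fun g j =>
    (if h : j / n < t then g ⟨j / n, h⟩ else 0).testBit (j % n) with hW
  set C : (Fin t → ℕ) → Set (ℕ → Bool) := fun g => {r | ∀ j < t * n, r j = W g j} with hC
  have key : ∀ g ∈ G, ∀ r ∈ C g, ∀ s : Fin t, val n s r = g s := by
    intro g hg r hr s
    have hgs : g s < 2^n := by
      have h1 := Fintype.mem_piFinset.mp hg s
      simpa using hB s s.isLt h1
    have hval : val n s r = wsum ((g s).testBit) n := by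
      refine wsum_congr ?_
      intro i hi
      have h2 : ((s:ℕ)+1) * n ≤ t * n := Nat.mul_le_mul_right n (by omega)
      have h3 : ((s:ℕ)+1) * n = (s:ℕ)*n + n := by ring
      have hjlt : (s:ℕ) * n + i < t * n := by omega
      have hdiv : ((s:ℕ)*n + i)/n = s := by
        rw [add_comm, Nat.add_mul_div_right _ _ hn, Nat.div_eq_of_lt hi, zero_add]
      have hmod : ((s:ℕ)*n + i) % n = i := by
        rw [add_comm, Nat.add_mul_mod_self_right, Nat.mod_eq_of_lt hi]
      have h4 := hr _ hjlt
      rw [h4, hW]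
      simp only [hdiv, hmod, dif_pos s.isLt]
    rw [hval, wsum_testBit _ _ hgs]
  have hunion : (⋂ s ∈ Finset.range t, {r | val n s r ∈ B s}) = ⋃ g ∈ G, C g := by
    ext r
    simp only [Set.mem_iInter, Set.mem_iUnion, Finset.mem_range, Set.mem_setOf_eq]
    constructor
    · intro h
      refine ⟨fun s => val n s r, Fintype.mem_piFinset.mpr fun s => h s s.isLt, ?_⟩
      intro j hj
      have hs : j / n < t := (Nat.div_lt_iff_lt_mul hn).mpr hj
      have hi : j % n < n := Nat.mod_lt _ hn
      rw [hW]
      simp only [dif_pos hs]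
      have hj' : (j / n) * n + j % n = j := by rw [mul_comm]; exact Nat.div_add_mod j n
      have hv : val n (j/n) r = wsum (fun i' => r ((j/n)*n + i')) n := rfl
      rw [hv, testBit_wsum _ _ _ hi, hj']
    · rintro ⟨g, hg, hr⟩ s hs
      have h5 := key g hg r hr ⟨s, hs⟩
      rw [show val n s r = val n ((⟨s, hs⟩ : Fin t) : ℕ) r from rfl, h5]
      exact Fintype.mem_piFinset.mp hg ⟨s, hs⟩
  have hdisj : (↑G : Set (Fin t → ℕ)).PairwiseDisjoint C := by
    intro g hg g' hg' hne
    refine Set.disjoint_left.mpr fun r hr hr' => hne ?_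
    funext s
    rw [← key g (by exact hg) r hr s, ← key g' (by exact hg') r hr' s]
  have hCmeas : ∀ g, MeasurableSet (C g) := by
    intro g
    have h6 : C g = ⋂ j ∈ Finset.range (t*n), (fun r : ℕ → Bool => r j) ⁻¹' {W g j} := by
      ext r; simp [hC, Finset.mem_range]
    rw [h6]
    exact Finset.measurableSet_biInter _ fun j _ =>
      measurable_pi_apply j (measurableSet_singleton _)
  have hCmeasure : ∀ g, μ (C g) = (1/2 : ENNReal) ^ (t*n) :=
    fun g => cylinder_measure hμ (t*n) (W g)
  rw [hunion, measure_biUnion_finset hdisj (fun g _ => hCmeas g)]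
  rw [Finset.sum_congr rfl fun g _ => hCmeasure g, Finset.sum_const, nsmul_eq_mul]
  congr 1
  rw [hG, Fintype.card_piFinset]
  push_cast
  rw [Fin.prod_univ_eq_prod_range (fun s => ((B s).card : ENNReal)) t]

open Classical in
noncomputable def sampler (b : ℕ) (hb : 1 ≤ b) : (ℕ → Bool) → Fin b := fun r =>
  if h : ∃ t, val b t r < b then ⟨val b (Nat.find h) r, Nat.find_spec h⟩ else ⟨0, hb⟩

def Ev (b t k : ℕ) : Set (ℕ → Bool) :=
  ⋂ s ∈ Finset.range (t+1), {r | val b s r ∈ (if s < t then Finset.Ico b (2^b) else {k})}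

def Rej (b t : ℕ) : Set (ℕ → Bool) :=
  ⋂ s ∈ Finset.range t, {r | val b s r ∈ Finset.Ico b (2^b)}

def Nev (b : ℕ) : Set (ℕ → Bool) := {r | ∀ t, ¬ val b t r < b}

lemma mem_Ev {b t k : ℕ} {r : ℕ → Bool} :
    r ∈ Ev b t k ↔ (∀ s < t, ¬ val b s r < b) ∧ val b t r = k := by
  simp only [Ev, Set.mem_iInter, Finset.mem_range, Set.mem_setOf_eq]
  constructor
  · intro h
    refine ⟨fun s hs => ?_, ?_⟩
    · have h1 := h s (by omega)
      rw [if_pos hs] at h1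
      simp only [Finset.mem_Ico] at h1
      omega
    · have h1 := h t (by omega)
      rw [if_neg (lt_irrefl t)] at h1
      simpa using h1
  · rintro ⟨h1, h2⟩ s hs
    by_cases hst : s < t
    · rw [if_pos hst]
      simp only [Finset.mem_Ico]
      exact ⟨by have := h1 s hst; omega, val_lt b s r⟩
    · have hs' : s = t := by omega
      subst hs'
      rw [if_neg (lt_irrefl s)]
      simpa using h2

lemma Ev_disjoint {b : ℕ} {t t' k k' : ℕ} (hk : k < b) (hne : t < t') :
    Disjoint (Ev b t k) (Ev b t' k') := by
  refine Set.disjoint_left.mpr fun r hr hr' => ?_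
  obtain ⟨h1, h2⟩ := mem_Ev.mp hr
  obtain ⟨h1', _⟩ := mem_Ev.mp hr'
  exact h1' t hne (by omega)

lemma Nev_subset_Rej (b t : ℕ) : Nev b ⊆ Rej b t := by
  intro r hr
  simp only [Rej, Set.mem_iInter, Finset.mem_range, Set.mem_setOf_eq, Finset.mem_Ico]
  intro s _
  exact ⟨by have := hr s; omega, val_lt b s r⟩

lemma meas_Ev (b t k : ℕ) : MeasurableSet (Ev b t k) := by
  refine Finset.measurableSet_biInter _ fun s _ => ?_
  exact val_meas b s .of_discrete

lemma meas_Nev (b : ℕ) : MeasurableSet (Nev b) := by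
  have h : Nev b = ⋂ t, val b t ⁻¹' {x | ¬ x < b} := by
    ext r; simp [Nev]
  rw [h]
  exact MeasurableSet.iInter fun t => val_meas b t .of_discrete

lemma sampler_fiber (b : ℕ) (hb : 1 ≤ b) (k : Fin b) :
    sampler b hb ⁻¹' {k} = (⋃ t, Ev b t (k : ℕ)) ∪ (if k = ⟨0, hb⟩ then Nev b else ∅) := by
  ext r
  simp only [Set.mem_preimage, Set.mem_singleton_iff, Set.mem_union, Set.mem_iUnion, sampler]
  constructor
  · intro hf
    by_cases h : ∃ t, val b t r < b
    · left
      rw [dif_pos h] at hf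
      exact ⟨Nat.find h, mem_Ev.mpr ⟨fun s hs => Nat.find_min h hs, congrArg Fin.val hf⟩⟩
    · right
      rw [dif_neg h] at hf
      rw [if_pos hf.symm]
      exact fun t => not_exists.mp h t
  · intro h
    rcases h with ⟨t, ht⟩ | hN
    · obtain ⟨h1, h2⟩ := mem_Ev.mp ht
      have hkb : val b t r < b := by rw [h2]; exact k.isLt
      have hex : ∃ t, val b t r < b := ⟨t, hkb⟩
      rw [dif_pos hex]
      have hft : Nat.find hex = t := by
        have hle : Nat.find hex ≤ t := Nat.find_min' hex hkb
        have hspec := Nat.find_spec hex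
        by_contra hne
        exact h1 _ (by omega) hspec
      subst hft
      exact Fin.ext h2
    · by_cases hk0 : k = ⟨0, hb⟩
      · rw [if_pos hk0] at hN
        have h : ¬ ∃ t, val b t r < b := by
          rintro ⟨t, ht⟩; exact hN t ht
        rw [dif_neg h, hk0]
      · rw [if_neg hk0] at hN
        exact absurd hN (Set.notMem_empty r)

lemma sampler_meas (b : ℕ) (hb : 1 ≤ b) : Measurable (sampler b hb) := by
  refine measurable_to_countable' fun k => ?_
  rw [sampler_fiber]
  refine (MeasurableSet.iUnion fun t => meas_Ev b t k).union ?_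
  split
  · exact meas_Nev b
  · exact MeasurableSet.empty

end FairCoinAux

open FairCoinAux in
/-- From infinitely many independent fair coin flips one can sample uniformly from
`Fin b` for any `b ≥ 1`: there is a measurable `f : (ℕ → Bool) → Fin b` whose
pushforward assigns measure `1 / b` to every singleton. -/
theorem exists_uniform_sampler
    (μ : Measure (ℕ → Bool)) (hμ : IsFairCoinMeasure μ)
    (b : ℕ) (hb : 1 ≤ b) :
    ∃ f : (ℕ → Bool) → Fin b, Measurable f ∧
      ∀ k : Fin b, Measure.map f μ {k} = 1 / (b : ENNReal) := by
  classical
  haveI := hμ.1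
  have hn : 0 < b := hb
  have hbp : b ≤ 2^b := (Nat.lt_two_pow_self (n := b)).le
  set q : ENNReal := (1/2 : ENNReal)^b with hq
  set p : ENNReal := ((2^b - b : ℕ) : ENNReal) * q with hp
  have h2b0 : ((2:ENNReal)^b) ≠ 0 := pow_ne_zero _ (by norm_num)
  have h2bt : ((2:ENNReal)^b) ≠ ⊤ := by
    exact ENNReal.pow_ne_top (by norm_num)
  have hq_eq : q = ((2:ENNReal)^b)⁻¹ := by
    rw [hq, one_div, ← ENNReal.inv_pow]
  -- measure of the rejection events
  have hR : ∀ t, μ (Rej b t) = p ^ t := by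
    intro t
    rw [Rej, block_measure hμ hn t _
      (fun s _ => fun x hx => by simp only [Finset.mem_Ico] at hx; simp only [Finset.mem_range]; omega)]
    have h1 : ∀ s ∈ Finset.range t,
        ((Finset.Ico b (2^b)).card : ENNReal) = ((2^b - b : ℕ) : ENNReal) := by
      intro s _; rw [Nat.card_Ico]
    rw [Finset.prod_congr rfl h1, Finset.prod_const, Finset.card_range, hp, mul_pow, hq, ← pow_mul, Nat.mul_comm t b]
  -- measure of the success events
  have hE : ∀ (t k : ℕ), k < b → μ (Ev b t k) = p ^ t * q := by
    intro t k hk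
    rw [Ev, block_measure hμ hn (t+1) _ ?_]
    · rw [Finset.prod_range_succ, if_neg (lt_irrefl t), Finset.card_singleton, Nat.cast_one,
        mul_one]
      have h1 : ∀ s ∈ Finset.range t,
          (((if s < t then Finset.Ico b (2^b) else ({k} : Finset ℕ))).card : ENNReal)
            = ((2^b - b : ℕ) : ENNReal) := by
        intro s hs; rw [if_pos (Finset.mem_range.mp hs), Nat.card_Ico]
      rw [Finset.prod_congr rfl h1, Finset.prod_const, Finset.card_range]
      have h3 : (1/2 : ENNReal)^((t+1)*b) = ((1/2:ENNReal)^b)^t * (1/2:ENNReal)^b := by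
        rw [mul_comm, pow_mul, pow_succ]
      rw [h3, hp, hq, mul_pow, mul_assoc]
    · intro s hs x hx
      split at hx
      · simp only [Finset.mem_Ico] at hx; simp only [Finset.mem_range]; omega
      · simp only [Finset.mem_singleton] at hx; simp only [Finset.mem_range]; omega
  -- p < 1
  have hplt : p < 1 := by
    rw [hp, hq_eq]
    have hlt : ((2^b - b : ℕ) : ENNReal) < (2:ENNReal)^b := by
      have hlt' : (2^b - b : ℕ) < 2^b := by omega
      calc ((2^b - b : ℕ) : ENNReal) < ((2^b : ℕ) : ENNReal) := by exact_mod_cast hlt'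
        _ = (2:ENNReal)^b := by push_cast; ring
    calc ((2^b - b : ℕ) : ENNReal) * ((2:ENNReal)^b)⁻¹
        < (2:ENNReal)^b * ((2:ENNReal)^b)⁻¹ := by
          rw [mul_comm _ ((2:ENNReal)^b)⁻¹, mul_comm ((2:ENNReal)^b)]
          exact ENNReal.mul_lt_mul_right (ENNReal.inv_ne_zero.mpr h2bt)
            (ENNReal.inv_ne_top.mpr h2b0) hlt
      _ = 1 := ENNReal.mul_inv_cancel h2b0 h2bt
  -- the "never accepts" event is null
  have hN0 : μ (Nev b) = 0 := by
    have hle : ∀ t, μ (Nev b) ≤ p ^ t := fun t => (hR t) ▸ measure_mono (Nev_subset_Rej b t)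
    have htend : Filter.Tendsto (fun t => p ^ t) Filter.atTop (nhds 0) :=
      ENNReal.tendsto_pow_atTop_nhds_zero_of_lt_one hplt
    exact le_antisymm (ge_of_tendsto' htend hle) zero_le
  -- the geometric series
  have hsum : ∑' t : ℕ, p ^ t * q = 1 / (b : ENNReal) := by
    rw [ENNReal.tsum_mul_right, ENNReal.tsum_geometric]
    have hb0 : ((b:ℕ) : ENNReal) ≠ 0 := Nat.cast_ne_zero.mpr (by omega)
    have hbt : ((b:ℕ) : ENNReal) ≠ ⊤ := ENNReal.natCast_ne_top b
    have h1mp : (1:ENNReal) - p = (b : ENNReal) * ((2:ENNReal)^b)⁻¹ := by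
      rw [hp, hq_eq]
      refine ENNReal.sub_eq_of_eq_add ?_ ?_
      · exact ENNReal.mul_ne_top (ENNReal.natCast_ne_top _) (ENNReal.inv_ne_top.mpr h2b0)
      · rw [← add_mul, ← Nat.cast_add]
        have h2 : b + (2^b - b) = 2^b := by omega
        rw [h2, show ((2^b : ℕ) : ENNReal) = (2:ENNReal)^b by push_cast; ring]
        exact (ENNReal.mul_inv_cancel h2b0 h2bt).symm
    rw [h1mp, hq_eq, ENNReal.mul_inv (Or.inl hb0) (Or.inl hbt), inv_inv, mul_assoc,
      ENNReal.mul_inv_cancel h2b0 h2bt, mul_one, one_div]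
  have hUnull : ∀ (A B : Set (ℕ → Bool)), μ B = 0 → μ (A ∪ B) = μ A := fun A B h =>
    le_antisymm ((measure_union_le A B).trans (by rw [h, add_zero]))
      (measure_mono Set.subset_union_left)
  refine ⟨sampler b hb, sampler_meas b hb, fun k => ?_⟩
  rw [Measure.map_apply (sampler_meas b hb) (measurableSet_singleton k), sampler_fiber,
    hUnull _ _ (by split; exacts [hN0, measure_empty])]
  rw [measure_iUnion ?_ (fun t => meas_Ev b t (k : ℕ))]
  · rw [tsum_congr (fun t => hE t (k : ℕ) k.isLt), hsum]
  · intro t t' hne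
    rcases hne.lt_or_gt with h | h
    · exact Ev_disjoint k.isLt h
    · exact (Ev_disjoint k.isLt h).symm
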